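/- Let h > 0 and ω > 0 with 0 < ωh < π. Define ϱ : (0, ∞) → ℝ by ϱ(σ) = |ρ(σ, ω, ω)|, i.e., ϱ(σ) = sqrt((σ² + 2ω² − σ² cos(ωh) − 2σω sin(ωh)) / (σ² + 2ω² − σ² cos(ωh) + 2σω sin(ωh))) (both numerator and denominator are positive for σ > 0). Then ϱ is differentiable at σ* = ω√2 / √(1 − cos(ωh)) and its derivative there vanishes: ϱ′(σ*) = 0. -/

import Mathlib

/-- The attenuation factor
`ρ(σ, ξ, ω) = (2 + i(σ/ω)(1 − e^{−iξh})) / (2 + i(σ/ω)(1 − e^{iξh}))`. -/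
noncomputable def rho (σ : ℝ) (ξ : ℂ) (ω h : ℝ) : ℂ :=
  (2 + Complex.I * ((σ : ℂ) / (ω : ℂ)) * (1 - Complex.exp (-(Complex.I * ξ * (h : ℂ))))) /
  (2 + Complex.I * ((σ : ℂ) / (ω : ℂ)) * (1 - Complex.exp (Complex.I * ξ * (h : ℂ))))

/-- the amplitude `ϱ(σ) = |ρ(σ, ω, ω)|` of the attenuation factor, which
equals the explicit square-root expression below, is differentiable at
`σ* = ω√2/√(1 − cos(ωh))` with vanishing derivative there. -/
theorem stmt18 (h ω : ℝ) (hh : 0 < h) (hω : 0 < ω) (hωh : ω * h < Real.pi) :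
    (∀ σ : ℝ, 0 < σ →
      ‖rho σ (ω : ℂ) ω h‖ =
        Real.sqrt
          ((σ ^ 2 + 2 * ω ^ 2 - σ ^ 2 * Real.cos (ω * h) - 2 * σ * ω * Real.sin (ω * h)) /
           (σ ^ 2 + 2 * ω ^ 2 - σ ^ 2 * Real.cos (ω * h) + 2 * σ * ω * Real.sin (ω * h)))) ∧
    HasDerivAt (fun σ : ℝ =>
        Real.sqrt
          ((σ ^ 2 + 2 * ω ^ 2 - σ ^ 2 * Real.cos (ω * h) - 2 * σ * ω * Real.sin (ω * h)) /
           (σ ^ 2 + 2 * ω ^ 2 - σ ^ 2 * Real.cos (ω * h) + 2 * σ * ω * Real.sin (ω * h))))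
      0 (ω * Real.sqrt 2 / Real.sqrt (1 - Real.cos (ω * h))) := by
  have hωh0 : 0 < ω * h := mul_pos hω hh
  have hspos : 0 < Real.sin (ω * h) := Real.sin_pos_of_pos_of_lt_pi hωh0 hωh
  have hpyth : Real.sin (ω * h) ^ 2 + Real.cos (ω * h) ^ 2 = 1 := Real.sin_sq_add_cos_sq _
  constructor
  · intro σ hσ
    set c := Real.cos (ω * h) with hc
    set s := Real.sin (ω * h) with hs
    have hc1 : c < 1 := by nlinarith
    have hω' : (ω : ℂ) ≠ 0 := by exact_mod_cast hω.ne'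
    have hnum : (2 + Complex.I * ((σ : ℂ) / (ω : ℂ)) *
        (1 - Complex.exp (-(Complex.I * (ω:ℂ) * (h : ℂ))))) =
        (((2 - σ * s / ω : ℝ)) : ℂ) + ((σ * (1 - c) / ω : ℝ) : ℂ) * Complex.I := by
      rw [show -(Complex.I * (ω:ℂ) * (h : ℂ)) = ((-(ω*h) : ℝ) : ℂ) * Complex.I by
        push_cast; ring, Complex.exp_mul_I, ← Complex.ofReal_cos, ← Complex.ofReal_sin,
        Real.cos_neg, Real.sin_neg]
      rw [← hc, ← hs]
      push_cast
      field_simp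
      ring_nf
      simp [Complex.I_sq]
      ring
    have hden : (2 + Complex.I * ((σ : ℂ) / (ω : ℂ)) *
        (1 - Complex.exp (Complex.I * (ω:ℂ) * (h : ℂ)))) =
        (((2 + σ * s / ω : ℝ)) : ℂ) + ((σ * (1 - c) / ω : ℝ) : ℂ) * Complex.I := by
      rw [show (Complex.I * (ω:ℂ) * (h : ℂ)) = (((ω*h) : ℝ) : ℂ) * Complex.I by
        push_cast; ring, Complex.exp_mul_I, ← Complex.ofReal_cos, ← Complex.ofReal_sin]
      rw [← hc, ← hs]
      push_cast
      field_simp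
      ring_nf
      simp [Complex.I_sq]
    rw [rho, hnum, hden, norm_div, Complex.norm_def, Complex.norm_def,
      Complex.normSq_add_mul_I, Complex.normSq_add_mul_I,
      ← Real.sqrt_div (by positivity)]
    congr 1
    have hD : 0 < σ ^ 2 + 2 * ω ^ 2 - σ ^ 2 * c + 2 * σ * ω * s := by
      nlinarith [mul_pos (mul_pos hσ hω) hspos, mul_nonneg (sq_nonneg σ) (sub_nonneg.2 hc1.le)]
    have hd2 : 0 < (2 + σ * s / ω) ^ 2 + (σ * (1 - c) / ω) ^ 2 := by positivity
    rw [div_eq_div_iff hd2.ne' hD.ne']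
    field_simp
    linear_combination (4 * σ ^ 3 * ω * s) * hpyth
  · set c := Real.cos (ω * h) with hc
    set s := Real.sin (ω * h) with hs
    have hc1 : c < 1 := by nlinarith
    have hc0 : 0 < 1 - c := by linarith
    set x := ω * Real.sqrt 2 / Real.sqrt (1 - c) with hx
    clear_value x
    have hxpos : 0 < x := by
      rw [hx]; apply div_pos (mul_pos hω (Real.sqrt_pos.2 (by norm_num))) (Real.sqrt_pos.2 hc0)
    have hkey : x ^ 2 * (1 - c) = 2 * ω ^ 2 := by
      rw [hx, div_pow, mul_pow, Real.sq_sqrt (by norm_num : (0:ℝ) ≤ 2),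
        Real.sq_sqrt hc0.le]
      field_simp
    have hNpos : 0 < x ^ 2 + 2 * ω ^ 2 - x ^ 2 * c - 2 * x * ω * s := by
      nlinarith [sq_nonneg (x * (1 - c) - ω * s), mul_pos (mul_pos hω hω) (mul_pos hc0 hc0), hpyth]
    have hDpos : 0 < x ^ 2 + 2 * ω ^ 2 - x ^ 2 * c + 2 * x * ω * s := by
      nlinarith [mul_pos (mul_pos hxpos hω) hspos, mul_nonneg (sq_nonneg x) (sub_nonneg.2 hc1.le)]
    have hN : HasDerivAt (fun σ : ℝ => σ ^ 2 + 2 * ω ^ 2 - σ ^ 2 * c - 2 * σ * ω * s)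
        (2 * x - 2 * x * c - 2 * ω * s) x := by
      have h1 : HasDerivAt (fun σ : ℝ => σ ^ 2) (2 * x) x := by
        simpa using hasDerivAt_pow 2 x
      simpa [mul_assoc, Pi.sub_def] using ((h1.add_const (2 * ω ^ 2)).sub (h1.mul_const c)).sub
        ((hasDerivAt_id x).mul_const (ω * s) |>.const_mul 2)
    have hD : HasDerivAt (fun σ : ℝ => σ ^ 2 + 2 * ω ^ 2 - σ ^ 2 * c + 2 * σ * ω * s)
        (2 * x - 2 * x * c + 2 * ω * s) x := by
      have h1 : HasDerivAt (fun σ : ℝ => σ ^ 2) (2 * x) x := by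
        simpa using hasDerivAt_pow 2 x
      simpa [mul_assoc, Pi.sub_def, Pi.add_def] using ((h1.add_const (2 * ω ^ 2)).sub (h1.mul_const c)).add
        ((hasDerivAt_id x).mul_const (ω * s) |>.const_mul 2)
    have hg := hN.div hD hDpos.ne'
    have hval : ((2 * x - 2 * x * c - 2 * ω * s) * (x ^ 2 + 2 * ω ^ 2 - x ^ 2 * c + 2 * x * ω * s) -
        (x ^ 2 + 2 * ω ^ 2 - x ^ 2 * c - 2 * x * ω * s) * (2 * x - 2 * x * c + 2 * ω * s)) /
        (x ^ 2 + 2 * ω ^ 2 - x ^ 2 * c + 2 * x * ω * s) ^ 2 = 0 := by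
      rw [div_eq_zero_iff]
      left
      linear_combination (4 * ω * s) * hkey
    rw [hval] at hg
    have hgx : (x ^ 2 + 2 * ω ^ 2 - x ^ 2 * c - 2 * x * ω * s) /
        (x ^ 2 + 2 * ω ^ 2 - x ^ 2 * c + 2 * x * ω * s) ≠ 0 := (div_pos hNpos hDpos).ne'
    have hfinal := (Real.hasDerivAt_sqrt hgx).comp x hg
    simpa [Function.comp_def, Pi.div_def] using hfinal
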